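/- For each k with 0 ≤ k ≤ n+1, the polynomial Q_k^{n+1} is orthogonal to every bivariate polynomial of total degree at most n-2 with respect to the Chebyshev weight W(x₁,x₂) = 1/(π²√(1-x₁²)√(1-x₂²)) on [-1,1]². -/

import Mathlib

open Real MeasureTheory Finset

/-- Evaluated Chebyshev polynomial of the first kind. -/
noncomputable def chT (m : ℤ) (x : ℝ) : ℝ := (Polynomial.Chebyshev.T ℝ m).eval x

/-- First coordinates of Padua points. -/
noncomputable def padXi (n k : ℕ) : ℝ := Real.cos (k * π / n)

/-- Second coordinates of Padua points. -/
noncomputable def padEta (n k j : ℕ) : ℝ :=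
  if Even k then Real.cos ((2 * (j : ℝ) - 1) * π / (n + 1))
  else Real.cos ((2 * (j : ℝ) - 2) * π / (n + 1))

/-- The set of Padua points of degree `n`. -/
noncomputable def Pad (n : ℕ) : Set (ℝ × ℝ) :=
  {p | ∃ k j : ℕ, k ≤ n ∧ 1 ≤ j ∧ j ≤ n / 2 + 1 ∧ p = (padXi n k, padEta n k j)}

/-- Normalized Chebyshev polynomials. -/
noncomputable def chTtil (m : ℕ) (x : ℝ) : ℝ :=
  if m = 0 then 1 else Real.sqrt 2 * chT m x

/-- Orthonormal basis `P_k^m` of bivariate Chebyshev polynomials (functions). -/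
noncomputable def chP (m k : ℕ) (x : ℝ × ℝ) : ℝ := chTtil (m - k) x.1 * chTtil k x.2

/-- Reproducing kernel of `Π_n²` in `L²(W)`. -/
noncomputable def kerK (n : ℕ) (x y : ℝ × ℝ) : ℝ :=
  ∑ m ∈ Finset.range (n + 1), ∑ j ∈ Finset.range (m + 1), chP m j x * chP m j y

/-- Modified kernel `K_n^*`. -/
noncomputable def kerKstar (n : ℕ) (x y : ℝ × ℝ) : ℝ :=
  kerK n x y - chT n x.1 * chT n y.1

/-- The generators `Q_k^{n+1}` of the Padua ideal (as functions). -/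
noncomputable def chQ (n k : ℕ) (x : ℝ × ℝ) : ℝ :=
  if k = 0 then chT (n + 1) x.1 - chT ((n : ℤ) - 1) x.1
  else chT ((n : ℤ) - k + 1) x.1 * chT k x.2 + chT ((n : ℤ) - k + 1) x.2 * chT ((k : ℤ) - 1) x.1

/-- The product Chebyshev weight on `[-1,1]²`. -/
noncomputable def chW (x : ℝ × ℝ) : ℝ :=
  1 / (π ^ 2 * Real.sqrt (1 - x.1 ^ 2) * Real.sqrt (1 - x.2 ^ 2))

/-- Evaluation of a bivariate polynomial at a point of `ℝ²`. -/
noncomputable def ev2 (P : MvPolynomial (Fin 2) ℝ) (x : ℝ × ℝ) : ℝ :=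
  MvPolynomial.eval (fun i : Fin 2 => if i = 0 then x.1 else x.2) P

/-- each `Q_k^{n+1}` is orthogonal to all bivariate polynomials
of total degree at most `n-2` with respect to the Chebyshev weight. -/

noncomputable def wgt (t : ℝ) : ℝ := (Real.sqrt (1 - t ^ 2))⁻¹

lemma wgt_nonneg (t : ℝ) : 0 ≤ wgt t := by
  unfold wgt; positivity

lemma intervalIntegrable_mul_wgt {h : ℝ → ℝ} (hh : Continuous h) :
    IntervalIntegrable (fun t => h t * wgt t) volume (-1) 1 := by
  rw [intervalIntegrable_iff_integrableOn_Ioc_of_le (by norm_num)]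
  have hw : IntegrableOn wgt (Set.Ioc (-1:ℝ) 1) := by
    have hderiv : ∀ x ∈ Set.Ioo (-1:ℝ) 1, HasDerivAt Real.arcsin (wgt x) x := fun x hx => by
      simpa [wgt, one_div] using
        Real.hasDerivAt_arcsin (by linarith [hx.1]) (by linarith [hx.2])
    exact intervalIntegral.integrableOn_deriv_of_nonneg Real.continuous_arcsin.continuousOn hderiv
      (fun x _ => wgt_nonneg x)
  obtain ⟨M, hM⟩ := (isCompact_Icc : IsCompact (Set.Icc (-1:ℝ) 1)).exists_bound_of_continuousOn
    hh.continuousOn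
  refine Integrable.mono' (hw.const_mul M) ?_ ?_
  · exact (hh.aestronglyMeasurable).mul
      ((Real.continuous_sqrt.comp (by continuity)).measurable.inv.aestronglyMeasurable)
  · refine (ae_restrict_iff' measurableSet_Ioc).2 (ae_of_all _ fun t ht => ?_)
    have h1 : ‖h t‖ ≤ M := hM t ⟨le_of_lt ht.1, ht.2⟩
    have := wgt_nonneg t
    calc ‖h t * wgt t‖ = ‖h t‖ * wgt t := by
          rw [norm_mul, Real.norm_of_nonneg this]
      _ ≤ M * wgt t := by
          exact mul_le_mul_of_nonneg_right h1 this

lemma cheb_wgt_zero (a : ℤ) (ha : 0 < a) :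
    (∫ x in (-1:ℝ)..1, (Polynomial.Chebyshev.T ℝ a).eval x * wgt x) = 0 := by
  have ha' : (a : ℝ) ≠ 0 := by exact_mod_cast ha.ne'
  have hint : IntervalIntegrable
      (fun x => (Polynomial.Chebyshev.T ℝ a).eval x * wgt x) volume (-1) 1 :=
    intervalIntegrable_mul_wgt (Polynomial.continuous _)
  have hderiv : ∀ x ∈ Set.Ioo (-1:ℝ) 1,
      HasDerivWithinAt (fun x => -(1/(a:ℝ)) * Real.sin (a * Real.arccos x))
        ((Polynomial.Chebyshev.T ℝ a).eval x * wgt x) (Set.Ioi x) x := by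
    intro x hx
    have h1 : HasDerivAt Real.arccos (-(1 / Real.sqrt (1 - x ^ 2))) x :=
      Real.hasDerivAt_arccos (by linarith [hx.1]) (by linarith [hx.2])
    have h2 := ((Real.hasDerivAt_sin ((a:ℝ) * Real.arccos x)).comp x
      (h1.const_mul (a:ℝ))).const_mul (-(1/(a:ℝ)))
    have hT : Real.cos ((a:ℝ) * Real.arccos x) = (Polynomial.Chebyshev.T ℝ a).eval x := by
      have h3 := Polynomial.Chebyshev.T_real_cos (θ := Real.arccos x) (n := a)
      rw [Real.cos_arccos (by linarith [hx.1]) (by linarith [hx.2])] at h3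
      exact h3.symm
    refine (HasDerivAt.hasDerivWithinAt ?_)
    refine h2.congr_deriv ?_
    rw [← hT]
    unfold wgt
    field_simp
  have := intervalIntegral.integral_eq_sub_of_hasDeriv_right_of_le (by norm_num : (-1:ℝ) ≤ 1)
    ((continuous_const.mul (Real.continuous_sin.comp
      (continuous_const.mul Real.continuous_arccos))).continuousOn) hderiv hint
  rw [this]
  simp [Function.comp, Real.arccos_one, Real.arccos_neg_one, Real.sin_int_mul_pi]

lemma cheb_mono_zero : ∀ (m : ℕ) (a : ℤ), (m:ℤ) < a →
    (∫ x in (-1:ℝ)..1, (Polynomial.Chebyshev.T ℝ a).eval x * x ^ m * wgt x) = 0 := by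
  intro m
  induction m with
  | zero =>
    intro a ha
    simpa using cheb_wgt_zero a ha
  | succ m ih =>
    intro a ha
    have key : (fun x : ℝ => (Polynomial.Chebyshev.T ℝ a).eval x * x ^ (m+1) * wgt x)
        = fun x => (1/2 : ℝ) * ((Polynomial.Chebyshev.T ℝ (a+1)).eval x * x ^ m * wgt x)
          + (1/2 : ℝ) * ((Polynomial.Chebyshev.T ℝ (a-1)).eval x * x ^ m * wgt x) := by
      funext x
      have h := Polynomial.Chebyshev.T_add_two ℝ (a - 1)
      rw [show a - 1 + 2 = a + 1 by ring, show a - 1 + 1 = a by ring] at h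
      rw [h]
      simp only [Polynomial.eval_sub, Polynomial.eval_mul, Polynomial.eval_ofNat,
        Polynomial.eval_X]
      ring
    rw [key]
    have i1 : IntervalIntegrable
        (fun x => (1/2 : ℝ) * ((Polynomial.Chebyshev.T ℝ (a+1)).eval x * x ^ m * wgt x))
        volume (-1) 1 := by
      have := (intervalIntegrable_mul_wgt
        (h := fun x => (Polynomial.Chebyshev.T ℝ (a+1)).eval x * x ^ m)
        (by exact (Polynomial.continuous _).mul (continuous_pow m))).const_mul (1/2 : ℝ)
      simpa [mul_assoc] using this
    have i2 : IntervalIntegrable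
        (fun x => (1/2 : ℝ) * ((Polynomial.Chebyshev.T ℝ (a-1)).eval x * x ^ m * wgt x))
        volume (-1) 1 := by
      have := (intervalIntegrable_mul_wgt
        (h := fun x => (Polynomial.Chebyshev.T ℝ (a-1)).eval x * x ^ m)
        (by exact (Polynomial.continuous _).mul (continuous_pow m))).const_mul (1/2 : ℝ)
      simpa [mul_assoc] using this
    rw [intervalIntegral.integral_add i1 i2, intervalIntegral.integral_const_mul,
      intervalIntegral.integral_const_mul, ih (a+1) (by omega), ih (a-1) (by omega)]
    ring

lemma chW_eq (p : ℝ × ℝ) : chW p = (π^2)⁻¹ * (wgt p.1 * wgt p.2) := by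
  unfold chW wgt
  rw [one_div, mul_inv, mul_inv]
  ring

lemma key_orth (P : MvPolynomial (Fin 2) ℝ) (A1 B1 A2 B2 : ℝ → ℝ)
    (hA1 : Continuous A1) (hB1 : Continuous B1) (hA2 : Continuous A2) (hB2 : Continuous B2)
    (h1 : ∀ d ∈ P.support, (∫ x in (-1:ℝ)..1, A1 x * x ^ (d 0) * wgt x) = 0 ∨
          (∫ y in (-1:ℝ)..1, B1 y * y ^ (d 1) * wgt y) = 0)
    (h2 : ∀ d ∈ P.support, (∫ x in (-1:ℝ)..1, A2 x * x ^ (d 0) * wgt x) = 0 ∨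
          (∫ y in (-1:ℝ)..1, B2 y * y ^ (d 1) * wgt y) = 0) :
    (∫ x in (-1:ℝ)..1, ∫ y in (-1:ℝ)..1,
      (A1 x * B1 y + A2 x * B2 y) * ev2 P (x, y) * chW (x, y)) = 0 := by
  classical
  set J1 : (Fin 2 →₀ ℕ) → ℝ := fun d => ∫ y in (-1:ℝ)..1, B1 y * y ^ (d 1) * wgt y with hJ1
  set J2 : (Fin 2 →₀ ℕ) → ℝ := fun d => ∫ y in (-1:ℝ)..1, B2 y * y ^ (d 1) * wgt y with hJ2
  have hev : ∀ x y : ℝ, ev2 P (x, y) = ∑ d ∈ P.support, P.coeff d * (x ^ (d 0) * y ^ (d 1)) := by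
    intro x y
    rw [ev2, MvPolynomial.eval_eq']
    refine Finset.sum_congr rfl fun d _ => ?_
    rw [Fin.prod_univ_two]
    norm_num
  have inner : ∀ x : ℝ, (∫ y in (-1:ℝ)..1, (A1 x * B1 y + A2 x * B2 y) * ev2 P (x, y) * chW (x, y))
      = ∑ d ∈ P.support, ((P.coeff d * (π^2)⁻¹ * J1 d) * (A1 x * x ^ (d 0) * wgt x)
        + (P.coeff d * (π^2)⁻¹ * J2 d) * (A2 x * x ^ (d 0) * wgt x)) := by
    intro x
    have hfun : (fun y => (A1 x * B1 y + A2 x * B2 y) * ev2 P (x, y) * chW (x, y))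
        = fun y => ∑ d ∈ P.support,
          ((P.coeff d * (π^2)⁻¹ * (A1 x * x ^ (d 0) * wgt x)) * (B1 y * y ^ (d 1) * wgt y)
          + (P.coeff d * (π^2)⁻¹ * (A2 x * x ^ (d 0) * wgt x)) * (B2 y * y ^ (d 1) * wgt y)) := by
      funext y
      rw [hev, chW_eq, Finset.mul_sum, Finset.sum_mul]
      exact Finset.sum_congr rfl fun d _ => by ring
    rw [hfun]
    have hi1 : ∀ d : Fin 2 →₀ ℕ, IntervalIntegrable
        (fun y => (P.coeff d * (π^2)⁻¹ * (A1 x * x ^ (d 0) * wgt x)) * (B1 y * y ^ (d 1) * wgt y))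
        volume (-1) 1 := fun d => by
      have := (intervalIntegrable_mul_wgt (h := fun y => B1 y * y ^ (d 1))
        (hB1.mul (continuous_pow _))).const_mul (P.coeff d * (π^2)⁻¹ * (A1 x * x ^ (d 0) * wgt x))
      simpa [mul_assoc] using this
    have hi2 : ∀ d : Fin 2 →₀ ℕ, IntervalIntegrable
        (fun y => (P.coeff d * (π^2)⁻¹ * (A2 x * x ^ (d 0) * wgt x)) * (B2 y * y ^ (d 1) * wgt y))
        volume (-1) 1 := fun d => by
      have := (intervalIntegrable_mul_wgt (h := fun y => B2 y * y ^ (d 1))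
        (hB2.mul (continuous_pow _))).const_mul (P.coeff d * (π^2)⁻¹ * (A2 x * x ^ (d 0) * wgt x))
      simpa [mul_assoc] using this
    rw [intervalIntegral.integral_finset_sum (fun d _ => (hi1 d).add (hi2 d))]
    refine Finset.sum_congr rfl fun d _ => ?_
    rw [intervalIntegral.integral_add (hi1 d) (hi2 d),
      intervalIntegral.integral_const_mul, intervalIntegral.integral_const_mul]
    ring
  rw [intervalIntegral.integral_congr (g := fun x => ∑ d ∈ P.support,
      ((P.coeff d * (π^2)⁻¹ * J1 d) * (A1 x * x ^ (d 0) * wgt x)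
        + (P.coeff d * (π^2)⁻¹ * J2 d) * (A2 x * x ^ (d 0) * wgt x))) (fun x _ => inner x)]
  have gi1 : ∀ d : Fin 2 →₀ ℕ, IntervalIntegrable
      (fun x => (P.coeff d * (π^2)⁻¹ * J1 d) * (A1 x * x ^ (d 0) * wgt x)) volume (-1) 1 :=
    fun d => by
      have := (intervalIntegrable_mul_wgt (h := fun x => A1 x * x ^ (d 0))
        (hA1.mul (continuous_pow _))).const_mul (P.coeff d * (π^2)⁻¹ * J1 d)
      simpa [mul_assoc] using this
  have gi2 : ∀ d : Fin 2 →₀ ℕ, IntervalIntegrable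
      (fun x => (P.coeff d * (π^2)⁻¹ * J2 d) * (A2 x * x ^ (d 0) * wgt x)) volume (-1) 1 :=
    fun d => by
      have := (intervalIntegrable_mul_wgt (h := fun x => A2 x * x ^ (d 0))
        (hA2.mul (continuous_pow _))).const_mul (P.coeff d * (π^2)⁻¹ * J2 d)
      simpa [mul_assoc] using this
  rw [intervalIntegral.integral_finset_sum (fun d _ => (gi1 d).add (gi2 d))]
  refine Finset.sum_eq_zero fun d hd => ?_
  rw [intervalIntegral.integral_add (gi1 d) (gi2 d),
    intervalIntegral.integral_const_mul, intervalIntegral.integral_const_mul]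
  rcases h1 d hd with h | h
  · rcases h2 d hd with h' | h'
    · rw [h, h']; ring
    · rw [h]; simp only [hJ2]; rw [h']; ring
  · rcases h2 d hd with h' | h'
    · simp only [hJ1]; rw [h, h']; ring
    · simp only [hJ1, hJ2]; rw [h, h']; ring

lemma chT_continuous (m : ℤ) : Continuous (chT m) := by
  unfold chT; exact Polynomial.continuous _

theorem Qk_orthogonal (n : ℕ) (hn : 2 ≤ n) (k : ℕ) (hk : k ≤ n + 1)
    (P : MvPolynomial (Fin 2) ℝ) (hP : P.totalDegree ≤ n - 2) :
    (∫ x in (-1 : ℝ)..1, ∫ y in (-1 : ℝ)..1,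
        chQ n k (x, y) * ev2 P (x, y) * chW (x, y)) = 0 := by
  have hsupp : ∀ d ∈ P.support, d 0 + d 1 ≤ n - 2 := by
    intro d hd
    have h := MvPolynomial.le_totalDegree hd
    have hs : (d.sum fun _ e => e) = d 0 + d 1 := by
      rw [Finsupp.sum_fintype _ _ (fun _ => rfl), Fin.sum_univ_two]
    rw [hs] at h
    exact le_trans h hP
  rcases Nat.eq_zero_or_pos k with hk0 | hkpos
  · subst hk0
    have hQ : ∀ x y : ℝ, chQ n 0 (x, y) =
        (chT ((n:ℤ) + 1) x - chT ((n:ℤ) - 1) x) * (1:ℝ) + (0:ℝ) * (0:ℝ) := by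
      intro x y; simp [chQ]
    simp only [hQ]
    refine key_orth P (fun x => chT ((n:ℤ) + 1) x - chT ((n:ℤ) - 1) x) (fun _ => 1)
      (fun _ => 0) (fun _ => 0) ((chT_continuous _).sub (chT_continuous _)) continuous_const
      continuous_const continuous_const ?_ ?_
    · intro d hd
      left
      have hd0 := hsupp d hd
      have e : (fun x : ℝ => (chT ((n:ℤ) + 1) x - chT ((n:ℤ) - 1) x) * x ^ (d 0) * wgt x)
          = fun x => ((Polynomial.Chebyshev.T ℝ ((n:ℤ) + 1)).eval x * x ^ (d 0) * wgt x)
            - ((Polynomial.Chebyshev.T ℝ ((n:ℤ) - 1)).eval x * x ^ (d 0) * wgt x) := by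
        funext x; unfold chT; ring
      rw [e, intervalIntegral.integral_sub
        (intervalIntegrable_mul_wgt (h := fun x => (Polynomial.Chebyshev.T ℝ ((n:ℤ) + 1)).eval x * x ^ (d 0))
          ((Polynomial.continuous _).mul (continuous_pow _)))
        (intervalIntegrable_mul_wgt (h := fun x => (Polynomial.Chebyshev.T ℝ ((n:ℤ) - 1)).eval x * x ^ (d 0))
          ((Polynomial.continuous _).mul (continuous_pow _))),
        cheb_mono_zero _ _ (by omega), cheb_mono_zero _ _ (by omega), sub_zero]
    · intro d hd
      left
      simp
  · have hk0' : k ≠ 0 := hkpos.ne'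
    have hQ : ∀ x y : ℝ, chQ n k (x, y) =
        chT ((n:ℤ) - k + 1) x * chT (k:ℤ) y + chT ((k:ℤ) - 1) x * chT ((n:ℤ) - k + 1) y := by
      intro x y; simp [chQ, hk0']; ring
    simp only [hQ]
    refine key_orth P (chT ((n:ℤ) - k + 1)) (chT (k:ℤ)) (chT ((k:ℤ) - 1)) (chT ((n:ℤ) - k + 1))
      (chT_continuous _) (chT_continuous _) (chT_continuous _) (chT_continuous _) ?_ ?_
    · intro d hd
      have hs := hsupp d hd
      rcases (by omega : ((d 0 : ℤ) < (n:ℤ) - k + 1 ∨ (d 1 : ℤ) < (k:ℤ))) with h | h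
      · left
        have := cheb_mono_zero (d 0) ((n:ℤ) - k + 1) h
        unfold chT
        exact this
      · right
        have := cheb_mono_zero (d 1) (k:ℤ) h
        unfold chT
        exact this
    · intro d hd
      have hs := hsupp d hd
      rcases (by omega : ((d 0 : ℤ) < (k:ℤ) - 1 ∨ (d 1 : ℤ) < (n:ℤ) - k + 1)) with h | h
      · left
        have := cheb_mono_zero (d 0) ((k:ℤ) - 1) h
        unfold chT
        exact this
      · right
        have := cheb_mono_zero (d 1) ((n:ℤ) - k + 1) h
        unfold chT
        exact this
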